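/- Under the assumptions of the previous theorem, and assuming additionally that E[β_k²] > 0, E[β_l²] > 0, and ξ is such that N̂(ξ) ≠ 0, ĥ_k(ξ) ≠ 0, ĥ_l(ξ) ≠ 0, the normalized quantity C_{kl}(ξ) := |Â_{kl}(ξ)| / sqrt(|Â_{kk}(ξ) Â_{ll}(ξ)|) equals |corr(β_k, β_l)| = |E[β_k β_l]| / sqrt(E[β_k²] E[β_l²]), independently of ξ, of the latency times t_{0,k}, t_{0,l}, and of the HRFs h_k, h_l. -/

import Mathlib

open scoped ComplexConjugate

/-- with `Â_{kl}(ξ) = E[β_kβ_l]·|N̂(ξ)|²·conj(ĥ_k(ξ))·ĥ_l(ξ)·e^{2πi(t_{0,k}-t_{0,l})ξ}`,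
if `E[β_k²] > 0`, `E[β_l²] > 0`, `N̂(ξ) ≠ 0`, `ĥ_k(ξ) ≠ 0`, `ĥ_l(ξ) ≠ 0`, then
`C_{kl}(ξ) = |Â_{kl}(ξ)| / sqrt(|Â_{kk}(ξ) Â_{ll}(ξ)|) = |E[β_kβ_l]| / sqrt(E[β_k²] E[β_l²])`,
independently of `ξ`, the latencies and the HRFs. -/
theorem substitute_equation (Ebkl Ebk2 Ebl2 : ℝ) (hk2 : 0 < Ebk2) (hl2 : 0 < Ebl2)
    (Nhat hk hl : ℂ) (hN : Nhat ≠ 0) (hhk : hk ≠ 0) (hhl : hl ≠ 0)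
    (t0k t0l ξ : ℝ)
    (Akl Akk All : ℂ)
    (hAkl : Akl = (Ebkl : ℂ) * ((‖Nhat‖ : ℝ) : ℂ) ^ 2 * conj hk * hl *
      Complex.exp (Complex.I * ((2 * Real.pi * (t0k - t0l) * ξ : ℝ) : ℂ)))
    (hAkk : Akk = (Ebk2 : ℂ) * ((‖Nhat‖ : ℝ) : ℂ) ^ 2 * conj hk * hk *
      Complex.exp (Complex.I * ((2 * Real.pi * (t0k - t0k) * ξ : ℝ) : ℂ)))
    (hAll : All = (Ebl2 : ℂ) * ((‖Nhat‖ : ℝ) : ℂ) ^ 2 * conj hl * hl *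
      Complex.exp (Complex.I * ((2 * Real.pi * (t0l - t0l) * ξ : ℝ) : ℂ))) :
    ‖Akl‖ / Real.sqrt (‖Akk * All‖)
      = |Ebkl| / Real.sqrt (Ebk2 * Ebl2) := by
  have hexp : ∀ x : ℝ, ‖Complex.exp (Complex.I * (x : ℂ))‖ = 1 := by
    intro x
    rw [mul_comm, Complex.norm_exp_ofReal_mul_I]
  set n := ‖Nhat‖ with hn
  have hn0 : 0 < n := norm_pos_iff.mpr hN
  have hk0 : 0 < ‖hk‖ := norm_pos_iff.mpr hhk
  have hl0 : 0 < ‖hl‖ := norm_pos_iff.mpr hhl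
  have h1 : ‖Akl‖ = |Ebkl| * (n ^ 2 * (‖hk‖ * ‖hl‖)) := by
    rw [hAkl]
    simp only [norm_mul, hexp, Complex.norm_conj, Complex.norm_real, Real.norm_eq_abs, norm_pow,
      abs_of_pos hn0, mul_one]
    ring
  have h2 : ‖Akk * All‖
      = (Ebk2 * Ebl2) * (n ^ 2 * (‖hk‖ * ‖hl‖)) ^ 2 := by
    rw [hAkk, hAll]
    simp only [norm_mul, hexp, Complex.norm_conj, Complex.norm_real, Real.norm_eq_abs, norm_pow,
      abs_of_pos hn0, abs_of_pos hk2, abs_of_pos hl2, mul_one]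
    ring
  have hpos : 0 < n ^ 2 * (‖hk‖ * ‖hl‖) := by positivity
  rw [h1, h2, Real.sqrt_mul (by positivity), Real.sqrt_sq hpos.le]
  rw [mul_div_mul_right _ _ (by positivity)]
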